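/- Let H be a complex Hilbert space, let T be a bounded linear operator on H with canonical polar decomposition T = U|T| and Duggal transform T^D = |T|U, let λ ∈ [0,1], and set Q_λ(T) = λ²|T|² + (1-λ)²|T^D|². Then ‖M_λ(T)‖⁴ ≤ ‖Q_λ(T)‖² + 4(λ-λ²)²·ω(T*T^D)² + 2(λ-λ²)·ω(Q_λ(T)T*T^D + T*T^D Q_λ(T)), where ω denotes the numerical radius. -/

import Mathlib

open ContinuousLinearMap

/-- The numerical radius `ω(A) = sup{|⟨Ax,x⟩| : ‖x‖ = 1}`. -/
noncomputable def numericalRadius {H : Type*} [NormedAddCommGroup H] [InnerProductSpace ℂ H]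
    (A : H →L[ℂ] H) : ℝ :=
  sSup {r : ℝ | ∃ x : H, ‖x‖ = 1 ∧ r = ‖inner ℂ (A x) x‖}

section Aux
variable {H : Type*} [NormedAddCommGroup H] [InnerProductSpace ℂ H]

local notation "⟪" x ", " y "⟫" => @inner ℂ _ _ x y

lemma nr_bdd (A : H →L[ℂ] H) :
    BddAbove {r : ℝ | ∃ x : H, ‖x‖ = 1 ∧ r = ‖inner ℂ (A x) x‖} := by
  refine ⟨‖A‖, ?_⟩
  rintro r ⟨x, hx, rfl⟩
  have h1 : ‖⟪A x, x⟫‖ = ‖⟪A x, x⟫‖ := rfl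
  have h2 : ‖⟪A x, x⟫‖ ≤ ‖A x‖ * ‖x‖ := norm_inner_le_norm _ _
  have h3 : ‖A x‖ ≤ ‖A‖ * ‖x‖ := A.le_opNorm x
  rw [h1]
  calc ‖⟪A x, x⟫‖ ≤ ‖A x‖ * ‖x‖ := h2
    _ ≤ ‖A‖ * ‖x‖ * ‖x‖ := by nlinarith [norm_nonneg (A x), norm_nonneg x]
    _ = ‖A‖ := by rw [hx]; ring

lemma abs_le_nr (A : H →L[ℂ] H) (x : H) (hx : ‖x‖ = 1) :
    ‖⟪A x, x⟫‖ ≤ numericalRadius A :=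
  le_csSup (nr_bdd A) ⟨x, hx, rfl⟩

lemma nr_nonneg (A : H →L[ℂ] H) : 0 ≤ numericalRadius A := by
  by_cases h : ∃ x : H, ‖x‖ = 1
  · obtain ⟨x, hx⟩ := h
    exact le_trans (norm_nonneg _) (abs_le_nr A x hx)
  · have hset : {r : ℝ | ∃ x : H, ‖x‖ = 1 ∧ r = ‖inner ℂ (A x) x‖} = ∅ := by
      ext r; simp only [Set.mem_setOf_eq, Set.mem_empty_iff_false, iff_false]
      rintro ⟨x, hx, -⟩; exact h ⟨x, hx⟩
    unfold numericalRadius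
    rw [hset, Real.sSup_empty]

lemma abs_le_nr' (A : H →L[ℂ] H) (z : H) :
    ‖⟪A z, z⟫‖ ≤ numericalRadius A * ‖z‖ ^ 2 := by
  rcases eq_or_ne z 0 with rfl | hz
  · simp
  · have hzn : (0:ℝ) < ‖z‖ := norm_pos_iff.2 hz
    set u : H := ((‖z‖ : ℂ))⁻¹ • z with hu
    have hun : ‖u‖ = 1 := by
      rw [hu, norm_smul, norm_inv, Complex.norm_real, Real.norm_eq_abs,
        abs_of_nonneg (norm_nonneg z)]
      field_simp
    have hinner : ⟪A u, u⟫ = ((‖z‖ : ℂ))⁻¹ * (starRingEnd ℂ) ((‖z‖ : ℂ))⁻¹ * ⟪A z, z⟫ := by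
      rw [hu, map_smul, inner_smul_left, inner_smul_right]; ring
    have habs : ‖⟪A u, u⟫‖ = (‖z‖⁻¹) ^ 2 * ‖⟪A z, z⟫‖ := by
      rw [hinner]
      simp only [norm_mul, norm_inv, Complex.norm_conj, Complex.norm_real, Real.norm_eq_abs,
        abs_of_nonneg (norm_nonneg z)]
      ring
    have := abs_le_nr A u hun
    rw [habs] at this
    have h2 : ‖⟪A z, z⟫‖ = ‖z‖ ^ 2 * ((‖z‖⁻¹) ^ 2 * ‖⟪A z, z⟫‖) := by
      field_simp
    rw [h2]
    calc ‖z‖ ^ 2 * ((‖z‖⁻¹) ^ 2 * ‖⟪A z, z⟫‖) ≤ ‖z‖ ^ 2 * numericalRadius A := by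
          apply mul_le_mul_of_nonneg_left this (by positivity)
      _ = numericalRadius A * ‖z‖ ^ 2 := by ring

end Aux

section Aux2
variable {H : Type*} [NormedAddCommGroup H] [InnerProductSpace ℂ H] [CompleteSpace H]

local notation "⟪" x ", " y "⟫" => @inner ℂ _ _ x y

lemma K_inner_le (S : H →L[ℂ] H) (z : H) :
    ‖⟪(S + adjoint S) z, z⟫‖ ≤ 2 * numericalRadius S * ‖z‖ ^ 2 := by
  have h1 : ⟪(S + adjoint S) z, z⟫ = ⟪S z, z⟫ + (starRingEnd ℂ) ⟪S z, z⟫ := by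
    rw [ContinuousLinearMap.add_apply, inner_add_left, adjoint_inner_left, inner_conj_symm]
  rw [h1, Complex.add_conj]
  rw [Complex.norm_real, Real.norm_eq_abs]
  have h2 : |2 * (⟪S z, z⟫ : ℂ).re| ≤ 2 * ‖⟪S z, z⟫‖ := by
    rw [abs_mul, abs_two]
    have := Complex.abs_re_le_norm (⟪S z, z⟫ : ℂ)
    linarith
  have h3 := abs_le_nr' S z
  nlinarith
lemma K_apply_le (S : H →L[ℂ] H) (x : H) (hx : ‖x‖ = 1) :
    ‖(S + adjoint S) x‖ ≤ 2 * numericalRadius S := by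
  set K := S + adjoint S with hK
  have hKsa : ContinuousLinearMap.adjoint K = K := by
    rw [hK, ← ContinuousLinearMap.star_eq_adjoint, ← ContinuousLinearMap.star_eq_adjoint,
      star_add, star_star, add_comm]
  have hre : ∀ y : H, ‖y‖ = 1 → (⟪K x, y⟫ : ℂ).re ≤ 2 * numericalRadius S := by
    intro y hy
    have hker : (⟪K y, x⟫ : ℂ).re = (⟪K x, y⟫ : ℂ).re := by
      have : (⟪K y, x⟫ : ℂ) = (starRingEnd ℂ) ⟪K x, y⟫ := by
        rw [← hKsa, adjoint_inner_left, inner_conj_symm, hKsa]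
      rw [this, Complex.conj_re]
    have h4 : 4 * (⟪K x, y⟫ : ℂ).re =
        (⟪K (x + y), x + y⟫ : ℂ).re - (⟪K (x - y), x - y⟫ : ℂ).re := by
      simp only [map_add, map_sub, inner_add_left, inner_add_right, inner_sub_left,
        inner_sub_right, Complex.add_re, Complex.sub_re]
      linarith
    have b1 := K_inner_le S (x + y)
    have b2 := K_inner_le S (x - y)
    have c1 := Complex.abs_re_le_norm (⟪K (x + y), x + y⟫ : ℂ)
    have c2 := Complex.abs_re_le_norm (⟪K (x - y), x - y⟫ : ℂ)
    have hpar := parallelogram_law_with_norm ℂ x y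
    have hp2 : ‖x + y‖ ^ 2 + ‖x - y‖ ^ 2 = 4 := by
      have : ‖x + y‖ * ‖x + y‖ + ‖x - y‖ * ‖x - y‖ = 2 * (‖x‖ * ‖x‖ + ‖y‖ * ‖y‖) := by
        simpa only [sq] using hpar
      rw [hx, hy] at this; nlinarith
    nlinarith [abs_nonneg ((⟪K (x + y), x + y⟫ : ℂ).re),
      abs_nonneg ((⟪K (x - y), x - y⟫ : ℂ).re),
      le_abs_self ((⟪K (x + y), x + y⟫ : ℂ).re),
      neg_abs_le ((⟪K (x - y), x - y⟫ : ℂ).re)]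
  rcases eq_or_ne (K x) 0 with h0 | h0
  · rw [h0, norm_zero]
    have := nr_nonneg S; linarith
  · have hKn : (0:ℝ) < ‖K x‖ := norm_pos_iff.2 h0
    set y : H := ((‖K x‖ : ℂ))⁻¹ • K x with hy
    have hyn : ‖y‖ = 1 := by
      rw [hy, norm_smul, norm_inv, Complex.norm_real, Real.norm_eq_abs,
        abs_of_nonneg (norm_nonneg _)]
      field_simp
    have hin : (⟪K x, y⟫ : ℂ) = ((‖K x‖ : ℝ) : ℂ) := by
      rw [hy, inner_smul_right, inner_self_eq_norm_sq_to_K]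
      have : ((‖K x‖ : ℝ) : ℂ) ≠ 0 := by
        simpa using hKn.ne'
      field_simp
      norm_cast
    have := hre y hyn
    rw [hin, Complex.ofReal_re] at this
    exact this

end Aux2

section Main
local notation "⟪" x ", " y "⟫" => @inner ℂ _ _ x y

set_option maxHeartbeats 1000000 in
theorem stmt10 {H : Type*} [NormedAddCommGroup H] [InnerProductSpace ℂ H] [CompleteSpace H]
    (T U R Q : H →L[ℂ] H)
    (hRpos : R.IsPositive) (hRsq : R * R = adjoint T * T)
    (hUpar : U * adjoint U * U = U)
    (hker : LinearMap.ker (U : H →ₗ[ℂ] H) = LinearMap.ker (T : H →ₗ[ℂ] H))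
    (hTUR : T = U * R)
    (l : ℝ) (hl : l ∈ Set.Icc (0 : ℝ) 1)
    (hQ : Q = ((l : ℂ) ^ 2) • (adjoint T * T) +
      (((1 : ℂ) - (l : ℂ)) ^ 2) • (adjoint (R * U) * (R * U))) :
    ‖(l : ℂ) • T + ((1 : ℂ) - (l : ℂ)) • (R * U)‖ ^ 4 ≤
      ‖Q‖ ^ 2 + 4 * (l - l ^ 2) ^ 2 * numericalRadius (adjoint T * (R * U)) ^ 2 +
        2 * (l - l ^ 2) *
          numericalRadius (Q * (adjoint T * (R * U)) + (adjoint T * (R * U)) * Q) := by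
  obtain ⟨hl0, hl1⟩ := hl
  set D := R * U with hD
  set S := ContinuousLinearMap.adjoint T * D with hS
  set K := S + ContinuousLinearMap.adjoint S with hK
  set W := Q * S + S * Q with hW
  set c : ℝ := l - l ^ 2 with hc
  set M := (l : ℂ) • T + ((1 : ℂ) - (l : ℂ)) • D with hM
  have hc0 : 0 ≤ c := by nlinarith
  have hnrS := nr_nonneg S
  have hnrW := nr_nonneg W
  set B : ℝ := ‖Q‖ ^ 2 + 4 * c ^ 2 * numericalRadius S ^ 2 + 2 * c * numericalRadius W with hB
  have hB0 : 0 ≤ B := by positivity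
  -- star facts
  have hQsa : star Q = Q := by
    rw [hQ]
    simp only [← ContinuousLinearMap.star_eq_adjoint, star_add, star_smul, star_mul, star_star]
    simp [map_pow, map_sub, Complex.conj_ofReal]
  -- key operator identity
  have hA : ContinuousLinearMap.adjoint M * M = Q + ((c : ℝ) : ℂ) • K := by
    rw [hQ, hM, hK, hS]
    simp only [← ContinuousLinearMap.star_eq_adjoint, star_add, star_smul, star_mul, star_star,
      Complex.star_def, map_sub, map_one, Complex.conj_ofReal]
    simp only [mul_add, add_mul, smul_mul_assoc, mul_smul_comm, smul_smul, smul_add]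
    match_scalars <;> (push_cast [hc]; ring)
  have hQadj : ContinuousLinearMap.adjoint Q = Q := by
    rw [← ContinuousLinearMap.star_eq_adjoint, hQsa]
  -- pointwise bound for unit vectors
  have key : ∀ x : H, ‖x‖ = 1 → ‖M x‖ ^ 4 ≤ B := by
    intro x hx
    have hMx : (⟪(ContinuousLinearMap.adjoint M * M) x, x⟫ : ℂ) = ((‖M x‖ : ℝ) : ℂ) ^ 2 := by
      rw [ContinuousLinearMap.mul_apply, adjoint_inner_left, inner_self_eq_norm_sq_to_K]
      norm_cast
    have h1 : ‖M x‖ ^ 4 = ‖⟪(ContinuousLinearMap.adjoint M * M) x, x⟫‖ ^ 2 := by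
      rw [hMx, norm_pow, Complex.norm_real, Real.norm_eq_abs, abs_of_nonneg (norm_nonneg _)]
      ring
    have h2 : ‖⟪(ContinuousLinearMap.adjoint M * M) x, x⟫‖ ≤
        ‖(ContinuousLinearMap.adjoint M * M) x‖ := by
      calc ‖(⟪(ContinuousLinearMap.adjoint M * M) x, x⟫ : ℂ)‖ ≤
          ‖(ContinuousLinearMap.adjoint M * M) x‖ * ‖x‖ := norm_inner_le_norm _ _
        _ = ‖(ContinuousLinearMap.adjoint M * M) x‖ := by rw [hx, mul_one]
    have h3 : (ContinuousLinearMap.adjoint M * M) x = Q x + ((c : ℝ) : ℂ) • K x := by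
      rw [hA]; rfl
    have h4 : ‖(ContinuousLinearMap.adjoint M * M) x‖ ^ 2 =
        ‖Q x‖ ^ 2 + 2 * (c * (⟪Q x, K x⟫ : ℂ).re) + c ^ 2 * ‖K x‖ ^ 2 := by
      rw [h3, norm_add_sq (𝕜 := ℂ), inner_smul_right, norm_smul]
      simp only [RCLike.re_to_complex, Complex.re_ofReal_mul, Complex.norm_real,
        Real.norm_eq_abs]
      rw [mul_pow, sq_abs]
    -- cross-term bound
    have hcross : (⟪Q x, K x⟫ : ℂ).re ≤ numericalRadius W := by
      have e1 : (⟪Q x, ContinuousLinearMap.adjoint S x⟫ : ℂ) = ⟪S (Q x), x⟫ :=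
        adjoint_inner_right S (Q x) x
      have e2 : (⟪Q (S x), x⟫ : ℂ) = ⟪S x, Q x⟫ := by
        conv_lhs => rw [← hQadj]
        exact adjoint_inner_left Q x (S x)
      have hKx : K x = S x + ContinuousLinearMap.adjoint S x := rfl
      have lhs : (⟪Q x, K x⟫ : ℂ) = ⟪Q x, S x⟫ + ⟪S (Q x), x⟫ := by
        rw [hKx, inner_add_right, e1]
      have hWx : W x = Q (S x) + S (Q x) := rfl
      have rhs : (⟪W x, x⟫ : ℂ) = ⟪S x, Q x⟫ + ⟪S (Q x), x⟫ := by
        rw [hWx, inner_add_left, e2]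
      have hre : (⟪Q x, K x⟫ : ℂ).re = (⟪W x, x⟫ : ℂ).re := by
        rw [lhs, rhs]
        simp only [Complex.add_re]
        have : (⟪Q x, S x⟫ : ℂ).re = (⟪S x, Q x⟫ : ℂ).re := by
          rw [← inner_conj_symm (𝕜 := ℂ) (S x) (Q x), Complex.conj_re]
        linarith
      rw [hre]
      exact le_trans (Complex.re_le_norm _) (abs_le_nr W x hx)
    have hQxn : ‖Q x‖ ≤ ‖Q‖ := by
      have := Q.le_opNorm x; rw [hx, mul_one] at this; exact this
    have hKxn : ‖K x‖ ≤ 2 * numericalRadius S := K_apply_le S x hx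
    have h5 : ‖(ContinuousLinearMap.adjoint M * M) x‖ ^ 2 ≤ B := by
      rw [h4, hB]
      have t1 : ‖Q x‖ ^ 2 ≤ ‖Q‖ ^ 2 := by nlinarith [norm_nonneg (Q x)]
      have hsq : ‖K x‖ ^ 2 ≤ (2 * numericalRadius S) ^ 2 := by
        nlinarith [mul_self_le_mul_self (norm_nonneg (K x)) hKxn]
      have t2 : c ^ 2 * ‖K x‖ ^ 2 ≤ 4 * c ^ 2 * numericalRadius S ^ 2 := by
        nlinarith [mul_le_mul_of_nonneg_left hsq (sq_nonneg c)]
      have t3 : 2 * (c * (⟪Q x, K x⟫ : ℂ).re) ≤ 2 * c * numericalRadius W := by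
        nlinarith [mul_le_mul_of_nonneg_left hcross hc0]
      linarith
    calc ‖M x‖ ^ 4 = ‖⟪(ContinuousLinearMap.adjoint M * M) x, x⟫‖ ^ 2 := h1
      _ ≤ ‖(ContinuousLinearMap.adjoint M * M) x‖ ^ 2 :=
          pow_le_pow_left₀ (norm_nonneg _) h2 2
      _ ≤ B := h5
  -- from pointwise to norm
  set r : ℝ := Real.sqrt (Real.sqrt B) with hr
  have hr0 : 0 ≤ r := Real.sqrt_nonneg _
  have hr4 : r ^ 4 = B := by
    have h1 : r ^ 2 = Real.sqrt B := Real.sq_sqrt (Real.sqrt_nonneg B)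
    have h2 : Real.sqrt B ^ 2 = B := Real.sq_sqrt hB0
    nlinarith
  have hMr : ‖M‖ ≤ r := by
    apply ContinuousLinearMap.opNorm_le_bound M hr0
    intro x
    rcases eq_or_ne x 0 with rfl | hx0
    · simp
    · have hxn : (0:ℝ) < ‖x‖ := norm_pos_iff.2 hx0
      set u : H := ((‖x‖ : ℂ))⁻¹ • x with hu
      have hun : ‖u‖ = 1 := by
        rw [hu, norm_smul, norm_inv, Complex.norm_real, Real.norm_eq_abs,
          abs_of_nonneg (norm_nonneg _)]
        field_simp
      have hMu : ‖M u‖ = ‖x‖⁻¹ * ‖M x‖ := by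
        rw [hu, map_smul, norm_smul, norm_inv, Complex.norm_real, Real.norm_eq_abs,
          abs_of_nonneg (norm_nonneg _)]
      have h6 : ‖M u‖ ^ 4 ≤ r ^ 4 := by rw [hr4]; exact key u hun
      have h7 : ‖M u‖ ≤ r :=
        (pow_le_pow_iff_left₀ (norm_nonneg (M u)) hr0 (by norm_num : (4:ℕ) ≠ 0)).1 h6
      rw [hMu] at h7
      calc ‖M x‖ = ‖x‖ * (‖x‖⁻¹ * ‖M x‖) := by field_simp
        _ ≤ ‖x‖ * r := by
            apply mul_le_mul_of_nonneg_left h7 (le_of_lt hxn)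
        _ = r * ‖x‖ := by ring
  calc ‖M‖ ^ 4 ≤ r ^ 4 := pow_le_pow_left₀ (norm_nonneg M) hMr 4
    _ = B := hr4

end Main
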